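/- Let G be a countable group acting on a compact Hausdorff space X by homeomorphisms, with the action minimal. Let f : X → ℝ be continuous with f ≥ 0 and f ≠ 0. Suppose given a family (f_i)_{i ∈ I} of nonnegative continuous functions on X together with group elements (s_i)_{i ∈ I} such that ∑_{i ∈ I} f_i² = 1 (uniform unordered convergence) and for every s ∈ G and x ∈ X there exists i ∈ I with s_i = s and f_i(x) > 0 (full support). Then there exists δ > 0 such that for all x ∈ X, ∑_{i ∈ I} f_i(x)² · f(s_i⁻¹ · x) ≥ δ. -/

import Mathlib

theorem full_support_generalized_measure_uniformly_positive
    {G X : Type*} [Group G] [Countable G]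
    [TopologicalSpace X] [CompactSpace X] [T2Space X]
    [MulAction G X] (hcont : ∀ s : G, Continuous fun x : X => s • x)
    (hmin : ∀ x : X, Dense (MulAction.orbit G x))
    (f : C(X, ℝ)) (hf : 0 ≤ f) (hfne : f ≠ 0)
    {I : Type*} (fi : I → C(X, ℝ)) (s : I → G)
    (hfi : ∀ i, 0 ≤ fi i)
    (hsum : HasSum (fun i => fi i ^ 2) 1)
    (hfull : ∀ (g : G) (x : X), ∃ i, s i = g ∧ 0 < fi i x) :
    ∃ δ > (0 : ℝ), ∀ x : X, δ ≤ ∑' i, (fi i x) ^ 2 * f ((s i)⁻¹ • x) := by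
  classical
  rcases isEmpty_or_nonempty X with hX | hX
  · exact ⟨1, one_pos, fun x => (IsEmpty.false x).elim⟩
  have hf' : ∀ y, 0 ≤ f y := fun y => hf y
  -- pointwise sum of squares is 1
  have hxs : ∀ x : X, HasSum (fun i => (fi i x) ^ 2) 1 := by
    intro x
    have := hsum.mapL (ContinuousMap.evalCLM ℝ x)
    simpa [ContinuousMap.evalCLM] using this
  have hterm_nonneg : ∀ (x : X) (i : I), 0 ≤ (fi i x) ^ 2 * f ((s i)⁻¹ • x) :=
    fun x i => mul_nonneg (sq_nonneg _) (hf' _)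
  have hsummable : ∀ x : X, Summable (fun i => (fi i x) ^ 2 * f ((s i)⁻¹ • x)) := by
    intro x
    refine Summable.of_nonneg_of_le (hterm_nonneg x) (fun i => ?_)
      (((hxs x).summable).mul_right ‖f‖)
    exact mul_le_mul_of_nonneg_left
      ((le_abs_self _).trans (f.norm_coe_le_norm _)) (sq_nonneg _)
  -- pointwise positivity
  have hpos : ∀ x : X, ∃ i, 0 < (fi i x) ^ 2 * f ((s i)⁻¹ • x) := by
    intro x
    obtain ⟨y, hy⟩ : ∃ y, 0 < f y := by
      by_contra h
      push_neg at h
      exact hfne (by ext z; exact le_antisymm (h z) (hf' z))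
    have hU : IsOpen {z : X | 0 < f z} := isOpen_lt continuous_const f.continuous
    obtain ⟨z, hz, hzU⟩ := (hmin x).exists_mem_open hU ⟨y, hy⟩
    obtain ⟨g, rfl⟩ := hz
    obtain ⟨i, hi, hip⟩ := hfull g⁻¹ x
    refine ⟨i, mul_pos (pow_pos hip 2) ?_⟩
    have : (s i)⁻¹ = g := by rw [hi, inv_inv]
    rw [this]
    exact hzU
  choose ix hix using hpos
  set T : X → X → ℝ := fun x y => (fi (ix x) y) ^ 2 * f ((s (ix x))⁻¹ • y) with hT
  have hTcont : ∀ x, Continuous (T x) := fun x =>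
    (((fi (ix x)).continuous.pow 2).mul (f.continuous.comp (hcont (s (ix x))⁻¹)))
  have hUopen : ∀ x, IsOpen {y | T x x / 2 < T x y} := fun x =>
    isOpen_lt continuous_const (hTcont x)
  have hcover : (Set.univ : Set X) ⊆ ⋃ x, {y | T x x / 2 < T x y} := by
    intro y _
    exact Set.mem_iUnion.2 ⟨y, half_lt_self (hix y)⟩
  obtain ⟨t, ht⟩ := isCompact_univ.elim_finite_subcover _ hUopen hcover
  have htne : t.Nonempty := by
    obtain ⟨x₀⟩ := hX
    obtain ⟨x, hx, _⟩ := Set.mem_iUnion₂.1 (ht (Set.mem_univ x₀))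
    exact ⟨x, hx⟩
  refine ⟨t.inf' htne (fun x => T x x / 2), ?_, ?_⟩
  · exact (Finset.lt_inf'_iff htne).2 fun x _ => half_pos (hix x)
  · intro y
    obtain ⟨x, hxt, hxy⟩ := Set.mem_iUnion₂.1 (ht (Set.mem_univ y))
    calc t.inf' htne (fun x => T x x / 2) ≤ T x x / 2 := Finset.inf'_le _ hxt
      _ ≤ T x y := le_of_lt hxy
      _ ≤ ∑' i, (fi i y) ^ 2 * f ((s i)⁻¹ • y) :=
        Summable.le_tsum (hsummable y) (ix x) fun j _ => hterm_nonneg y j
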